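/- Let α : ℕ → ℝ be defined by α_i = 2^{-ν(i+1)}, where ν(m) is the 2-adic valuation of m (so the sequence α is 1, 1/2, 1, 1/4, 1, 1/2, 1, 1/8, ... , the 'abacaba' sequence). Then liminf_{k → ∞} (α_0 · α_1 · ⋯ · α_{k-1})^{1/k} > 0. -/

import Mathlib

open Filter

/-- The "abacaba" sequence `αᵢ = 2^{-ν(i+1)}` (ν the 2-adic valuation). -/
noncomputable def abacaba (i : ℕ) : ℝ := (2 : ℝ)⁻¹ ^ (padicValNat 2 (i + 1))

lemma sum_padicValNat_eq (k : ℕ) :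
    ∑ i ∈ Finset.range k, padicValNat 2 (i + 1) = padicValNat 2 (Nat.factorial k) := by
  induction k with
  | zero => simp
  | succ n ih =>
      rw [Finset.sum_range_succ, ih, Nat.factorial_succ,
        padicValNat.mul (Nat.succ_ne_zero n) (Nat.factorial_ne_zero n), Nat.add_comm]

lemma padicValNat_two_factorial_le (k : ℕ) : padicValNat 2 (Nat.factorial k) ≤ k := by
  have h := sub_one_mul_padicValNat_factorial (p := 2) k
  simp only [show (2:ℕ) - 1 = 1 from rfl, one_mul] at h
  omega

lemma term_ge (k : ℕ) :
    (2 : ℝ)⁻¹ ≤ (∏ i ∈ Finset.range k, abacaba i) ^ ((k : ℝ)⁻¹) := by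
  rcases Nat.eq_zero_or_pos k with rfl | hk
  · norm_num
  have hprod : (∏ i ∈ Finset.range k, abacaba i)
      = (2 : ℝ)⁻¹ ^ (∑ i ∈ Finset.range k, padicValNat 2 (i + 1)) := by
    simp [abacaba, Finset.prod_pow_eq_pow_sum]
  have hsum : (∑ i ∈ Finset.range k, padicValNat 2 (i + 1)) ≤ k := by
    rw [sum_padicValNat_eq]; exact padicValNat_two_factorial_le k
  have h2 : ((2 : ℝ)⁻¹) ^ k ≤ ∏ i ∈ Finset.range k, abacaba i := by
    rw [hprod]
    exact pow_le_pow_of_le_one (by norm_num) (by norm_num) hsum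
  calc (2 : ℝ)⁻¹ = (((2 : ℝ)⁻¹ ^ k) ^ ((k : ℝ)⁻¹)) := by
        rw [← Real.rpow_natCast ((2:ℝ)⁻¹) k, ← Real.rpow_mul (by norm_num)]
        rw [mul_inv_cancel₀ (by exact_mod_cast hk.ne'), Real.rpow_one]
    _ ≤ (∏ i ∈ Finset.range k, abacaba i) ^ ((k : ℝ)⁻¹) :=
        Real.rpow_le_rpow (by positivity) h2 (by positivity)

/-- Kakutani's estimate: the geometric means of partial products of the abacaba
sequence have strictly positive liminf. -/
theorem abacaba_liminf_pos :
    0 < liminf (fun k : ℕ =>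
      (∏ i ∈ Finset.range k, abacaba i) ^ ((k : ℝ)⁻¹)) atTop := by
  have hb : ∀ k : ℕ, (∏ i ∈ Finset.range k, abacaba i) ^ ((k : ℝ)⁻¹) ≤ 1 := by
    intro k
    apply Real.rpow_le_one (Finset.prod_nonneg fun i _ => by unfold abacaba; positivity) _ (by positivity)
    apply Finset.prod_le_one
    · intro i _; unfold abacaba; positivity
    · intro i _; exact pow_le_one₀ (by norm_num) (by norm_num)
  have hcb : IsCoboundedUnder (· ≥ ·) atTop (fun k : ℕ =>
      (∏ i ∈ Finset.range k, abacaba i) ^ ((k : ℝ)⁻¹)) := by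
    apply Filter.IsBoundedUnder.isCoboundedUnder_ge
    exact ⟨1, Filter.eventually_map.mpr (Filter.Eventually.of_forall hb)⟩
  have : (2 : ℝ)⁻¹ ≤ liminf (fun k : ℕ =>
      (∏ i ∈ Finset.range k, abacaba i) ^ ((k : ℝ)⁻¹)) atTop :=
    le_liminf_of_le hcb (Filter.Eventually.of_forall term_ge)
  linarith
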